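/- arXiv:2502.14414 — 2 statements merged into one kernel-verified Lean document; each statement's English description precedes it below -/
import Mathlib

section
/- Let q > 2 be an odd prime power. The reduced Datta-Johnsen code for m = 2, obtained by evaluating the linear combinations a y_1 + b y_2 + c of the elementary symmetric polynomials y_1 = x_1+x_2, y_2 = x_1x_2 on a set of representatives of the q(q-1)/2 unordered pairs of distinct elements of F_q, is a linear code of length q(q-1)/2, dimension 3, and minimum distance (q-1)(q-2)/2. -/
set_option linter.unusedSectionVars false

namespace DJaux
variable {F : Type*} [Field F] [Fintype F] [DecidableEq F]

lemma exists_pair_of_mem {s : Finset F} (hs : s.card = 2) {x : F} (hx : x ∈ s) :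
    ∃ y, y ≠ x ∧ s = {x, y} := by
  obtain ⟨u, v, huv, rfl⟩ := Finset.card_eq_two.mp hs
  rcases Finset.mem_insert.mp hx with rfl | hx'
  · exact ⟨v, huv.symm, rfl⟩
  · rcases Finset.mem_singleton.mp hx' with rfl
    exact ⟨u, huv, Finset.pair_comm u x⟩

lemma ev_pair (a b c u v : F) (h : u ≠ v) :
    a * (∑ z ∈ ({u, v} : Finset F), z) + b * (∏ z ∈ ({u, v} : Finset F), z) + c
      = a * (u + v) + b * (u * v) + c := by
  rw [Finset.sum_pair h, Finset.prod_pair h]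

lemma ev_zero (hq : 2 < Fintype.card F) {a b c : F}
    (h : ∀ s : {s : Finset F // s.card = 2},
      a * (∑ x ∈ s.1, x) + b * (∏ x ∈ s.1, x) + c = 0) :
    a = 0 ∧ b = 0 ∧ c = 0 := by
  obtain ⟨x₁, hx₁, x₂, hx₂, hne⟩ :
      ∃ x ∈ Finset.univ.erase (0 : F), ∃ y ∈ Finset.univ.erase (0 : F), x ≠ y := by
    apply Finset.one_lt_card.mp
    rw [Finset.card_erase_of_mem (Finset.mem_univ _), Finset.card_univ]
    omega
  have hx₁0 : x₁ ≠ 0 := Finset.ne_of_mem_erase hx₁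
  have hx₂0 : x₂ ≠ 0 := Finset.ne_of_mem_erase hx₂
  have e1 := h ⟨{0, x₁}, Finset.card_pair (Ne.symm hx₁0)⟩
  have e2 := h ⟨{0, x₂}, Finset.card_pair (Ne.symm hx₂0)⟩
  have e3 := h ⟨{x₁, x₂}, Finset.card_pair hne⟩
  rw [ev_pair a b c 0 x₁ (Ne.symm hx₁0)] at e1
  rw [ev_pair a b c 0 x₂ (Ne.symm hx₂0)] at e2
  rw [ev_pair a b c x₁ x₂ hne] at e3
  have ha : a = 0 := by
    have h12 : a * (x₁ - x₂) = 0 := by linear_combination e1 - e2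
    rcases mul_eq_zero.mp h12 with h | h
    · exact h
    · exact absurd (sub_eq_zero.mp h) hne
  have hc : c = 0 := by linear_combination e1 - x₁ * ha
  have hb : b = 0 := by
    have h3 : b * (x₁ * x₂) = 0 := by linear_combination e3 - (x₁ + x₂) * ha - hc
    rcases mul_eq_zero.mp h3 with h | h
    · exact h
    · exact absurd h (mul_ne_zero hx₁0 hx₂0)
  exact ⟨ha, hb, hc⟩

lemma zero_count_le (hq : 2 < Fintype.card F) (a b c : F)
    (h : ¬(a = 0 ∧ b = 0 ∧ c = 0)) :
    (Finset.univ.filter (fun s : {s : Finset F // s.card = 2} =>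
      a * (∑ x ∈ s.1, x) + b * (∏ x ∈ s.1, x) + c = 0)).card ≤ Fintype.card F - 1 := by
  set Z := Finset.univ.filter (fun s : {s : Finset F // s.card = 2} =>
      a * (∑ x ∈ s.1, x) + b * (∏ x ∈ s.1, x) + c = 0) with hZdef
  have uniq : ∀ x : F, ¬(b * x + a = 0 ∧ a * x + c = 0) → ∀ y y' : F,
      a * (x + y) + b * (x * y) + c = 0 → a * (x + y') + b * (x * y') + c = 0 → y = y' := by
    intro x hx y y' hy hy'
    by_cases hbx : b * x + a = 0
    · have hax : a * x + c ≠ 0 := fun hax => hx ⟨hbx, hax⟩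
      exact absurd (by linear_combination hy - y * hbx) hax
    · have : (b * x + a) * (y - y') = 0 := by linear_combination hy - hy'
      rcases mul_eq_zero.mp this with h' | h'
      · exact absurd h' hbx
      · exact sub_eq_zero.mp h'
  have good_mem : ∀ x : F, ¬(b * x + a = 0 ∧ a * x + c = 0) →
      ∀ s ∈ Z, ∀ s' ∈ Z, x ∈ s.1 → x ∈ s'.1 → s = s' := by
    intro x hx s hs s' hs' hxs hxs'
    obtain ⟨y, hy, hsy⟩ := exists_pair_of_mem s.2 hxs
    obtain ⟨y', hy', hsy'⟩ := exists_pair_of_mem s'.2 hxs'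
    have es : a * (x + y) + b * (x * y) + c = 0 := by
      have := (Finset.mem_filter.mp hs).2
      rwa [hsy, ev_pair a b c x y (Ne.symm hy)] at this
    have es' : a * (x + y') + b * (x * y') + c = 0 := by
      have := (Finset.mem_filter.mp hs').2
      rwa [hsy', ev_pair a b c x y' (Ne.symm hy')] at this
    have : y = y' := uniq x hx y y' es es'
    apply Subtype.ext
    rw [hsy, hsy', this]
  have bad_unique : ∀ x x' : F, (b * x + a = 0 ∧ a * x + c = 0) →
      (b * x' + a = 0 ∧ a * x' + c = 0) → x = x' := by
    intro x x' ⟨h1, h2⟩ ⟨h3, h4⟩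
    by_cases hb : b = 0
    · have ha : a = 0 := by linear_combination h1 - x * hb
      have hc : c = 0 := by linear_combination h2 - x * ha
      exact absurd ⟨ha, hb, hc⟩ h
    · have : b * (x - x') = 0 := by linear_combination h1 - h3
      rcases mul_eq_zero.mp this with h' | h'
      · exact absurd h' hb
      · exact sub_eq_zero.mp h'
  by_cases hB : ∃ x0 : F, b * x0 + a = 0 ∧ a * x0 + c = 0
  · obtain ⟨x0, hx0⟩ := hB
    letI : LinearOrder F := LinearOrder.lift' (Fintype.equivFin F) (Equiv.injective _)
    set ψ : {s : Finset F // s.card = 2} → F := fun s =>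
      if x0 ∈ s.1 then (∑ z ∈ s.1, z) - x0
      else s.1.min' (Finset.card_pos.mp (by rw [s.2]; norm_num)) with hψ
    have hψmem : ∀ s : {s : Finset F // s.card = 2}, ψ s ∈ s.1 ∧ ψ s ≠ x0 := by
      intro s
      by_cases hx0s : x0 ∈ s.1
      · obtain ⟨y, hy, hsy⟩ := exists_pair_of_mem s.2 hx0s
        have hsum : ∑ z ∈ s.1, z = x0 + y := by
          rw [hsy, Finset.sum_pair (Ne.symm hy)]
        have : ψ s = y := by rw [hψ]; simp [hx0s, hsum]
        rw [this]
        exact ⟨by rw [hsy]; simp, hy⟩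
      · have hne : (s.1 : Finset F).Nonempty := Finset.card_pos.mp (by rw [s.2]; norm_num)
        have : ψ s = s.1.min' hne := by rw [hψ]; simp [hx0s]
        rw [this]
        refine ⟨Finset.min'_mem _ _, fun hc => hx0s ?_⟩
        rw [← hc]; exact Finset.min'_mem _ _
    calc Z.card ≤ (Finset.univ.erase x0).card := by
          apply Finset.card_le_card_of_injOn ψ
          · intro s _
            exact Finset.mem_erase.mpr ⟨(hψmem s).2, Finset.mem_univ _⟩
          · intro s hs s' hs' hss
            have h1 := hψmem s
            have h2 := hψmem s'
            have hgood : ¬(b * (ψ s) + a = 0 ∧ a * (ψ s) + c = 0) := by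
              intro hbad
              exact h1.2 (bad_unique _ _ hbad hx0)
            have hmem' : ψ s ∈ s'.1 := by rw [hss]; exact h2.1
            exact good_mem (ψ s) hgood s (by simpa using hs) s' (by simpa using hs') h1.1 hmem'
      _ = Fintype.card F - 1 := by
          rw [Finset.card_erase_of_mem (Finset.mem_univ _), Finset.card_univ]
  · push_neg at hB
    have hdisj : ∀ s ∈ Z, ∀ t ∈ Z, s ≠ t → Disjoint s.1 t.1 := by
      intro s hs t ht hst
      rw [Finset.disjoint_left]
      intro x hxs hxt
      have : ¬(b * x + a = 0 ∧ a * x + c = 0) := by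
        intro ⟨h1, h2⟩; exact (hB x h1) h2
      exact hst (good_mem x this s hs t ht hxs hxt)
    have hcard : (Z.biUnion (fun s => s.1)).card = 2 * Z.card := by
      rw [Finset.card_biUnion hdisj]
      rw [Finset.sum_congr rfl (fun s _ => s.2), Finset.sum_const, smul_eq_mul, mul_comm]
    have hle : (Z.biUnion (fun s => s.1)).card ≤ Fintype.card F := Finset.card_le_univ _
    omega

lemma count_pairs_with_zero :
    (Finset.univ.filter (fun s : {s : Finset F // s.card = 2} =>
      ∏ x ∈ s.1, x = 0)).card = Fintype.card F - 1 := by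
  rw [show Fintype.card F - 1 = (Finset.univ.erase (0 : F)).card by
    rw [Finset.card_erase_of_mem (Finset.mem_univ _), Finset.card_univ]]
  have mem0 : ∀ s : {s : Finset F // s.card = 2},
      s ∈ Finset.univ.filter (fun s : {s : Finset F // s.card = 2} =>
        ∏ x ∈ s.1, x = 0) → (0 : F) ∈ s.1 := by
    intro s hs
    have := (Finset.mem_filter.mp hs).2
    obtain ⟨x, hx, hx0⟩ := Finset.prod_eq_zero_iff.mp this
    rwa [hx0] at hx
  apply Finset.card_bij' (i := fun s _ => ∑ x ∈ s.1, x)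
    (j := fun y hy => ⟨{0, y}, Finset.card_pair (Ne.symm (Finset.ne_of_mem_erase hy))⟩)
  case hi =>
    intro s hs
    obtain ⟨y, hy, hsy⟩ := exists_pair_of_mem s.2 (mem0 s hs)
    rw [hsy, Finset.sum_pair (Ne.symm hy), zero_add]
    exact Finset.mem_erase.mpr ⟨hy, Finset.mem_univ _⟩
  case hj =>
    intro y hy
    refine Finset.mem_filter.mpr ⟨Finset.mem_univ _, ?_⟩
    rw [Finset.prod_pair (Ne.symm (Finset.ne_of_mem_erase hy)), zero_mul]
  case left_inv =>
    intro s hs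
    obtain ⟨y, hy, hsy⟩ := exists_pair_of_mem s.2 (mem0 s hs)
    apply Subtype.ext
    simp only [hsy, Finset.sum_pair (Ne.symm hy), zero_add]
  case right_inv =>
    intro y hy
    simp only [Finset.sum_pair (Ne.symm (Finset.ne_of_mem_erase hy)), zero_add]

end DJaux

/-- The reduced Datta-Johnsen code for `m = 2`: evaluating `a y₁ + b y₂ + c` (with
`y₁ = ξ + ξ'`, `y₂ = ξξ'`) on the unordered pairs of distinct elements of `F_q`, `q > 2`
odd, gives a linear code of length `q(q-1)/2`, dimension `3` (i.e. `q³` codewords), and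
minimum distance `(q-1)(q-2)/2`. -/
theorem reduced_DJ_code_m2 (F : Type*) [Field F] [Fintype F] [DecidableEq F]
    (hodd : Odd (Fintype.card F)) (hq : 2 < Fintype.card F) :
    let q := Fintype.card F
    let ev : F → F → F → {s : Finset F // s.card = 2} → F :=
      fun a b c s => a * (∑ x ∈ s.1, x) + b * (∏ x ∈ s.1, x) + c
    let Code : Set ({s : Finset F // s.card = 2} → F) := {w | ∃ a b c, w = ev a b c}
    let wt : ({s : Finset F // s.card = 2} → F) → ℕ :=
      fun w => (Finset.univ.filter (fun s => w s ≠ 0)).card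
    Nat.card {s : Finset F // s.card = 2} = q * (q - 1) / 2 ∧
    Nat.card Code = q ^ 3 ∧
    (∀ w ∈ Code, w ≠ 0 → (q - 1) * (q - 2) / 2 ≤ wt w) ∧
    (∃ w ∈ Code, w ≠ 0 ∧ wt w = (q - 1) * (q - 2) / 2) := by
  intro q ev Code wt
  have hq' : q = Fintype.card F := rfl
  obtain ⟨j, hj⟩ : ∃ j, q = 2 * j + 3 := by
    obtain ⟨k, hk⟩ := hodd
    exact ⟨k - 1, by omega⟩
  obtain ⟨P, hP⟩ : ∃ P, j * j = P := ⟨_, rfl⟩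
  have hNval : Fintype.card {s : Finset F // s.card = 2} = 2 * P + 5 * j + 3 := by
    rw [Fintype.card_finset_len, Nat.choose_two_right, ← hq', hj]
    rw [show (2 * j + 3) - 1 = 2 * j + 2 by omega]
    rw [show (2 * j + 3) * (2 * j + 2) = (2 * P + 5 * j + 3) * 2 by rw [← hP]; ring]
    exact Nat.mul_div_cancel _ (by norm_num)
  have hdval : (q - 1) * (q - 2) / 2 = 2 * P + 3 * j + 1 := by
    rw [hj, show 2 * j + 3 - 1 = 2 * j + 2 by omega, show 2 * j + 3 - 2 = 2 * j + 1 by omega]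
    rw [show (2 * j + 2) * (2 * j + 1) = (2 * P + 3 * j + 1) * 2 by rw [← hP]; ring]
    exact Nat.mul_div_cancel _ (by norm_num)
  refine ⟨?_, ?_, ?_, ?_⟩
  · rw [Nat.card_eq_fintype_card, Fintype.card_finset_len, Nat.choose_two_right]
  · have hinj : Function.Injective (fun p : F × F × F => ev p.1 p.2.1 p.2.2) := by
      intro p p' hpp
      have h0 : ∀ s : {s : Finset F // s.card = 2},
          (p.1 - p'.1) * (∑ x ∈ s.1, x) + (p.2.1 - p'.2.1) * (∏ x ∈ s.1, x)
            + (p.2.2 - p'.2.2) = 0 := by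
        intro s
        have := congrFun hpp s
        simp only [ev] at this
        linear_combination this
      obtain ⟨h1, h2, h3⟩ := DJaux.ev_zero hq h0
      obtain ⟨a1, b1, c1⟩ := p
      obtain ⟨a2, b2, c2⟩ := p'
      simp only [Prod.mk.injEq]
      exact ⟨sub_eq_zero.mp h1, sub_eq_zero.mp h2, sub_eq_zero.mp h3⟩
    have hCode : Code = Set.range (fun p : F × F × F => ev p.1 p.2.1 p.2.2) := by
      ext w
      simp only [Code, Set.mem_setOf_eq, Set.mem_range]
      constructor
      · rintro ⟨a, b, c, rfl⟩; exact ⟨(a, b, c), rfl⟩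
      · rintro ⟨⟨a, b, c⟩, rfl⟩; exact ⟨a, b, c, rfl⟩
    rw [hCode, Nat.card_range_of_injective hinj, Nat.card_eq_fintype_card,
      Fintype.card_prod, Fintype.card_prod]
    show Fintype.card F * (Fintype.card F * Fintype.card F) = Fintype.card F ^ 3
    ring
  · intro w hw hw0
    obtain ⟨a, b, c, rfl⟩ := hw
    have habc : ¬(a = 0 ∧ b = 0 ∧ c = 0) := by
      rintro ⟨rfl, rfl, rfl⟩
      apply hw0
      funext s
      simp [ev]
    have hZ := DJaux.zero_count_le hq a b c habc
    have hsum := Finset.card_filter_add_card_filter_not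
      (s := (Finset.univ : Finset {s : Finset F // s.card = 2}))
      (p := fun s => a * (∑ x ∈ s.1, x) + b * (∏ x ∈ s.1, x) + c = 0)
    have hwt : wt (ev a b c) = (Finset.univ.filter (fun s : {s : Finset F // s.card = 2} =>
        ¬(a * (∑ x ∈ s.1, x) + b * (∏ x ∈ s.1, x) + c = 0))).card := by
      simp only [wt, ev, ne_eq]
    rw [hwt, hdval]
    rw [Finset.card_univ, hNval] at hsum
    have hqF : Fintype.card F = 2 * j + 3 := hj
    omega
  · refine ⟨ev 0 1 0, ⟨0, 1, 0, rfl⟩, ?_, ?_⟩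
    · obtain ⟨x₁, hx₁, x₂, hx₂, hne⟩ :
          ∃ x ∈ Finset.univ.erase (0 : F), ∃ y ∈ Finset.univ.erase (0 : F), x ≠ y := by
        apply Finset.one_lt_card.mp
        rw [Finset.card_erase_of_mem (Finset.mem_univ _), Finset.card_univ]
        omega
      intro h0
      have h1 : x₁ * x₂ = 0 := by
        have h2 := congrFun h0 ⟨{x₁, x₂}, Finset.card_pair hne⟩
        simp only [ev, Finset.prod_pair hne, Pi.zero_apply, zero_mul, one_mul,
          zero_add, add_zero] at h2
        exact h2
      rcases mul_eq_zero.mp h1 with h | h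
      · exact Finset.ne_of_mem_erase hx₁ h
      · exact Finset.ne_of_mem_erase hx₂ h
    · have hcount : (Finset.univ.filter (fun s : {s : Finset F // s.card = 2} =>
          ev 0 1 0 s = 0)).card = Fintype.card F - 1 := by
        have hiff : ∀ s : {s : Finset F // s.card = 2},
            (ev 0 1 0 s = 0) ↔ (∏ x ∈ s.1, x = 0) := by
          intro s; simp [ev]
        rw [Finset.filter_congr (fun s _ => hiff s)]
        exact DJaux.count_pairs_with_zero
      have hsum := Finset.card_filter_add_card_filter_not
        (s := (Finset.univ : Finset {s : Finset F // s.card = 2}))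
        (p := fun s => ev 0 1 0 s = 0)
      have hwt : wt (ev 0 1 0) = (Finset.univ.filter
          (fun s : {s : Finset F // s.card = 2} => ¬(ev 0 1 0 s = 0))).card := by
        simp only [wt, ne_eq]
      rw [hwt, hdval]
      rw [Finset.card_univ, hNval, hcount] at hsum
      have hqF : Fintype.card F = 2 * j + 3 := hj
      omega
end

section
/- Let q > 2 be an odd prime power. In the reduced Datta-Johnsen code for m = 2 (evaluating a y_1 + b y_2 + c on unordered pairs of distinct elements of F_q), every non-zero codeword has weight in the set {(q-1)(q-2)/2, (q-1)^2/2, (q^2-2q+3)/2, q(q-1)/2}. -/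
open Finset

private lemma DJ_two_to_one {F : Type*} [Fintype F] [DecidableEq F] (Q : Finset F → Prop)
    [DecidablePred Q] :
    2 * (Finset.univ.filter (fun s : {s : Finset F // s.card = 2} => Q s.1)).card
      = (Finset.univ.offDiag.filter (fun p : F × F => Q ({p.1, p.2} : Finset F))).card := by
  have h1 : (Finset.univ.filter (fun s : {s : Finset F // s.card = 2} => Q s.1)).card
      = ((Finset.powersetCard 2 (Finset.univ : Finset F)).filter Q).card := by
    apply Finset.card_bij (fun s _ => s.1)
    · intro s hs
      simp only [mem_filter, mem_powersetCard_univ]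
      exact ⟨s.2, (mem_filter.mp hs).2⟩
    · intro s _ t _ h; exact Subtype.ext h
    · intro t ht
      simp only [mem_filter, mem_powersetCard_univ] at ht
      exact ⟨⟨t, ht.1⟩, mem_filter.mpr ⟨mem_univ _, ht.2⟩, rfl⟩
  have H : ∀ p ∈ Finset.univ.offDiag.filter (fun p : F × F => Q ({p.1, p.2} : Finset F)),
      ({p.1, p.2} : Finset F) ∈ (Finset.powersetCard 2 (Finset.univ : Finset F)).filter Q := by
    intro p hp
    simp only [mem_filter, mem_offDiag] at hp
    simp only [mem_filter, mem_powersetCard_univ]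
    exact ⟨Finset.card_pair hp.1.2.2, hp.2⟩
  have h2 := Finset.card_eq_sum_card_fiberwise H
  have h3 : ∀ s ∈ (Finset.powersetCard 2 (Finset.univ : Finset F)).filter Q,
      ((Finset.univ.offDiag.filter (fun p : F × F => Q ({p.1, p.2} : Finset F))).filter
        (fun p => ({p.1, p.2} : Finset F) = s)).card = 2 := by
    intro s hs
    simp only [mem_filter, mem_powersetCard_univ] at hs
    obtain ⟨x, y, hxy, rfl⟩ := Finset.card_eq_two.mp hs.1
    have hset : (Finset.univ.offDiag.filter (fun p : F × F => Q ({p.1, p.2} : Finset F))).filter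
        (fun p => ({p.1, p.2} : Finset F) = {x, y}) = {(x, y), (y, x)} := by
      ext ⟨u, v⟩
      simp only [mem_filter, mem_offDiag, mem_univ, true_and, mem_insert, mem_singleton,
        Prod.mk.injEq]
      constructor
      · rintro ⟨⟨huv, hQ⟩, hpair⟩
        have hu : u = x ∨ u = y := by
          have : u ∈ ({x, y} : Finset F) := hpair ▸ (by simp)
          simpa using this
        have hv : v = x ∨ v = y := by
          have : v ∈ ({x, y} : Finset F) := hpair ▸ (by simp)
          simpa using this
        rcases hu with rfl | rfl <;> rcases hv with rfl | rfl
        · exact absurd rfl huv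
        · exact Or.inl ⟨rfl, rfl⟩
        · exact Or.inr ⟨rfl, rfl⟩
        · exact absurd rfl huv
      · rintro (⟨rfl, rfl⟩ | ⟨rfl, rfl⟩)
        · exact ⟨⟨hxy, hs.2⟩, rfl⟩
        · exact ⟨⟨hxy.symm, by rw [Finset.pair_comm]; exact hs.2⟩, Finset.pair_comm _ _⟩
    rw [hset]
    exact Finset.card_pair (fun h => hxy (congrArg Prod.fst h))
  rw [h1, h2, Finset.sum_congr rfl h3, Finset.sum_const, smul_eq_mul, mul_comm]

private lemma DJ_count_lin {F : Type*} [Field F] [Fintype F] [DecidableEq F]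
    (h2 : (2 : F) ≠ 0) (t : F) :
    (Finset.univ.offDiag.filter (fun p : F × F => p.1 + p.2 = t)).card
      = Fintype.card F - 1 := by
  have himg : Finset.univ.offDiag.filter (fun p : F × F => p.1 + p.2 = t)
      = (Finset.univ.filter (fun x : F => x + x ≠ t)).image (fun x => (x, t - x)) := by
    ext ⟨u, v⟩
    simp only [mem_filter, mem_offDiag, mem_univ, true_and, mem_image, Prod.mk.injEq]
    constructor
    · rintro ⟨huv, hsum⟩
      refine ⟨u, ?_, rfl, by linear_combination -hsum⟩
      intro h
      exact huv (by linear_combination h - hsum)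
    · rintro ⟨x, hx, rfl, rfl⟩
      refine ⟨?_, by ring⟩
      intro h
      exact hx (by linear_combination h)
  rw [himg, Finset.card_image_of_injective _ (fun x y h => congrArg Prod.fst h)]
  have hone : (Finset.univ.filter (fun x : F => x + x = t)).card = 1 := by
    rw [Finset.card_eq_one]
    refine ⟨2⁻¹ * t, ?_⟩
    ext x
    simp only [mem_filter, mem_univ, true_and, mem_singleton]
    constructor
    · intro h
      field_simp
      linear_combination h
    · rintro rfl
      field_simp
      ring
  have := Finset.card_filter_add_card_filter_not (s := (Finset.univ : Finset F))
    (p := fun x : F => x + x = t)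
  simp only [Finset.card_univ] at this
  have hcard : (Finset.univ.filter (fun x : F => ¬ x + x = t)).card
      = (Finset.univ.filter (fun x : F => x + x ≠ t)).card := rfl
  omega

private lemma DJ_count_hyp_zero {F : Type*} [Field F] [Fintype F] [DecidableEq F] :
    (Finset.univ.offDiag.filter (fun p : F × F => p.1 * p.2 = 0)).card
      = 2 * (Fintype.card F - 1) := by
  have himg : Finset.univ.offDiag.filter (fun p : F × F => p.1 * p.2 = 0)
      = ((Finset.univ.filter (fun x : F => x ≠ 0)).image (fun x => ((0 : F), x)))
        ∪ ((Finset.univ.filter (fun x : F => x ≠ 0)).image (fun x => (x, (0 : F)))) := by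
    ext ⟨u, v⟩
    simp only [mem_filter, mem_offDiag, mem_univ, true_and, mem_union, mem_image, Prod.mk.injEq]
    constructor
    · rintro ⟨huv, hmul⟩
      rcases mul_eq_zero.mp hmul with rfl | rfl
      · exact Or.inl ⟨v, fun h => huv h.symm, rfl, rfl⟩
      · exact Or.inr ⟨u, huv, rfl, rfl⟩
    · rintro (⟨x, hx, rfl, rfl⟩ | ⟨x, hx, rfl, rfl⟩)
      · exact ⟨fun h => hx h.symm, by ring⟩
      · exact ⟨hx, by ring⟩
  rw [himg, Finset.card_union_of_disjoint, Finset.card_image_of_injective _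
      (fun x y h => congrArg Prod.snd h), Finset.card_image_of_injective _
      (fun x y h => congrArg Prod.fst h)]
  · rw [Finset.filter_ne', Finset.card_erase_of_mem (mem_univ _), Finset.card_univ]
    omega
  · rw [Finset.disjoint_left]
    rintro ⟨u, v⟩ h1 h2
    simp only [mem_image, mem_filter, mem_univ, true_and, Prod.mk.injEq] at h1 h2
    obtain ⟨x, hx, hx1, hx2⟩ := h1
    obtain ⟨y, hy, hy1, hy2⟩ := h2
    exact hy (hy1.trans hx1.symm)

private lemma DJ_count_hyp_ne {F : Type*} [Field F] [Fintype F] [DecidableEq F]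
    (D : F) (hD : D ≠ 0) :
    (Finset.univ.offDiag.filter (fun p : F × F => p.1 * p.2 = D)).card
      = (Finset.univ.filter (fun u : F => u ≠ 0 ∧ u * u ≠ D)).card := by
  have himg : Finset.univ.offDiag.filter (fun p : F × F => p.1 * p.2 = D)
      = (Finset.univ.filter (fun u : F => u ≠ 0 ∧ u * u ≠ D)).image
          (fun u => (u, D * u⁻¹)) := by
    ext ⟨u, v⟩
    simp only [mem_filter, mem_offDiag, mem_univ, true_and, mem_image, Prod.mk.injEq]
    constructor
    · rintro ⟨huv, hmul⟩
      have hu : u ≠ 0 := by rintro rfl; exact hD (by linear_combination -hmul)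
      refine ⟨u, ⟨hu, ?_⟩, rfl, ?_⟩
      · intro h
        exact huv (mul_left_cancel₀ hu (h.trans hmul.symm))
      · field_simp
        linear_combination -hmul
    · rintro ⟨x, ⟨hx0, hxx⟩, rfl, rfl⟩
      refine ⟨?_, by field_simp⟩
      intro h
      apply hxx
      field_simp at h
      linear_combination h
  rw [himg, Finset.card_image_of_injective _ (fun x y h => congrArg Prod.fst h)]

private lemma DJ_filter_sq {F : Type*} [Field F] [Fintype F] [DecidableEq F]
    (h2 : (2 : F) ≠ 0) {D d : F} (hd : d * d = D) (hD : D ≠ 0) :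
    (Finset.univ.filter (fun u : F => u ≠ 0 ∧ u * u ≠ D)).card = Fintype.card F - 3 := by
  have hd0 : d ≠ 0 := by rintro rfl; exact hD (by linear_combination -hd)
  have hdd : d ≠ -d := by
    intro h
    exact hd0 (by
      have : (2 : F) * d = 0 := by linear_combination h
      exact (mul_eq_zero.mp this).resolve_left h2)
  have hneg : (Finset.univ.filter (fun u : F => ¬ (u ≠ 0 ∧ u * u ≠ D)))
      = ({0, d, -d} : Finset F) := by
    ext u
    simp only [mem_filter, mem_univ, true_and, mem_insert, mem_singleton, not_and_or, not_not,
      ne_eq, not_not]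
    constructor
    · rintro (rfl | h)
      · exact Or.inl rfl
      · rcases mul_self_eq_mul_self_iff.mp (h.trans hd.symm) with rfl | rfl
        · exact Or.inr (Or.inl rfl)
        · exact Or.inr (Or.inr rfl)
    · rintro (rfl | rfl | rfl)
      · exact Or.inl rfl
      · exact Or.inr hd
      · exact Or.inr (by linear_combination hd)
  have hcard3 : (({0, d, -d} : Finset F)).card = 3 := by
    rw [Finset.card_insert_of_notMem (by
        simp only [mem_insert, mem_singleton]
        rintro (h | h)
        · exact hd0 h.symm
        · exact hd0 (neg_eq_zero.mp h.symm)),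
      Finset.card_insert_of_notMem (by simpa using hdd), Finset.card_singleton]
  have := Finset.card_filter_add_card_filter_not (s := (Finset.univ : Finset F))
    (p := fun u : F => u ≠ 0 ∧ u * u ≠ D)
  simp only [Finset.card_univ] at this
  rw [hneg, hcard3] at this
  omega

private lemma DJ_filter_nonsq {F : Type*} [Field F] [Fintype F] [DecidableEq F]
    {D : F} (hns : ∀ d : F, d * d ≠ D) :
    (Finset.univ.filter (fun u : F => u ≠ 0 ∧ u * u ≠ D)).card = Fintype.card F - 1 := by
  have hneg : (Finset.univ.filter (fun u : F => ¬ (u ≠ 0 ∧ u * u ≠ D)))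
      = ({0} : Finset F) := by
    ext u
    simp only [mem_filter, mem_univ, true_and, mem_singleton, not_and_or, not_not, ne_eq, not_not]
    constructor
    · rintro (rfl | h)
      · rfl
      · exact absurd h (hns u)
    · rintro rfl; exact Or.inl rfl
  have := Finset.card_filter_add_card_filter_not (s := (Finset.univ : Finset F))
    (p := fun u : F => u ≠ 0 ∧ u * u ≠ D)
  simp only [Finset.card_univ] at this
  rw [hneg, Finset.card_singleton] at this
  omega

private lemma DJ_change_var {F : Type*} [Field F] [Fintype F] [DecidableEq F]
    (a b c : F) (hb : b ≠ 0) :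
    (Finset.univ.offDiag.filter
        (fun p : F × F => a * (p.1 + p.2) + b * (p.1 * p.2) + c = 0)).card
      = (Finset.univ.offDiag.filter (fun p : F × F => p.1 * p.2 = a * a - b * c)).card := by
  apply Finset.card_nbij' (fun p : F × F => (b * p.1 + a, b * p.2 + a))
    (fun p : F × F => ((p.1 - a) / b, (p.2 - a) / b))
  · rintro ⟨u, v⟩ hp
    simp only [Finset.mem_coe, mem_filter, mem_offDiag, mem_univ, true_and] at hp ⊢
    obtain ⟨huv, heq⟩ := hp
    refine ⟨fun h => huv (mul_left_cancel₀ hb (by linear_combination h)), ?_⟩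
    linear_combination b * heq
  · rintro ⟨u, v⟩ hp
    simp only [Finset.mem_coe, mem_filter, mem_offDiag, mem_univ, true_and] at hp ⊢
    obtain ⟨huv, heq⟩ := hp
    constructor
    · intro h
      apply huv
      field_simp at h
      linear_combination h
    · have h9 : b * (a * ((u - a) / b + (v - a) / b) + b * ((u - a) / b * ((v - a) / b)) + c)
          = 0 := by
        field_simp
        linear_combination heq
      exact (mul_eq_zero.mp h9).resolve_left hb
  · rintro ⟨u, v⟩ hp
    simp only [Prod.mk.injEq]
    constructor <;> field_simp <;> ring
  · rintro ⟨u, v⟩ hp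
    simp only [Prod.mk.injEq]
    constructor <;> field_simp <;> ring

private lemma DJ_sq_id1 {q : ℕ} (hq : 2 ≤ q) : (q - 1) * (q - 1) = q * q - 2 * q + 1 := by
  have h1 : 1 ≤ q := by omega
  have h2 : 2 * q ≤ q * q := by nlinarith
  zify [h1, h2]
  ring

private lemma DJ_sq_id2 {q : ℕ} (hq : 3 ≤ q) : (q - 1) * (q - 2) = q * q - 3 * q + 2 := by
  have h1 : 1 ≤ q := by omega
  have h2 : 2 ≤ q := by omega
  have h3 : 3 * q ≤ q * q := by nlinarith
  zify [h1, h2, h3]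
  ring

/-- Weight distribution of the reduced Datta-Johnsen code for `m = 2`: every non-zero
codeword has weight `(q-1)(q-2)/2`, `(q-1)²/2`, `(q²-2q+3)/2` or `q(q-1)/2`. -/
theorem reduced_DJ_code_m2_weights (F : Type*) [Field F] [Fintype F] [DecidableEq F]
    (hodd : Odd (Fintype.card F)) (hq : 2 < Fintype.card F) :
    let q := Fintype.card F
    let ev : F → F → F → {s : Finset F // s.card = 2} → F :=
      fun a b c s => a * (∑ x ∈ s.1, x) + b * (∏ x ∈ s.1, x) + c
    let Code : Set ({s : Finset F // s.card = 2} → F) := {w | ∃ a b c, w = ev a b c}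
    let wt : ({s : Finset F // s.card = 2} → F) → ℕ :=
      fun w => (Finset.univ.filter (fun s => w s ≠ 0)).card
    ∀ w ∈ Code, w ≠ 0 →
      wt w ∈ ({(q - 1) * (q - 2) / 2, (q - 1) ^ 2 / 2, (q ^ 2 - 2 * q + 3) / 2,
        q * (q - 1) / 2} : Set ℕ) := by
  intro q ev Code wt w hw hw0
  obtain ⟨a, b, c, rfl⟩ := hw
  have hq3 : 3 ≤ q := hq
  have hoddq : q % 2 = 1 := Nat.odd_iff.mp hodd
  have hchar : ringChar F ≠ 2 := by
    intro h
    have := FiniteField.even_card_of_char_two h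
    omega
  have h2F : (2 : F) ≠ 0 := Ring.two_ne_zero hchar
  have hq2 : 3 * q ≤ q * q := by nlinarith
  have hqodd2 : (q * q) % 2 = 1 := Nat.odd_iff.mp (hodd.mul hodd)
  simp only [Set.mem_insert_iff, Set.mem_singleton_iff]
  have key : ∀ a b c : F,
      2 * wt (ev a b c)
        = (q * q - q) - (Finset.univ.offDiag.filter
            (fun p : F × F => a * (p.1 + p.2) + b * (p.1 * p.2) + c = 0)).card := by
    intro a b c
    have h1 : 2 * wt (ev a b c)
        = (Finset.univ.offDiag.filter (fun p : F × F =>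
            a * (∑ x ∈ ({p.1, p.2} : Finset F), x)
              + b * (∏ x ∈ ({p.1, p.2} : Finset F), x) + c ≠ 0)).card :=
      DJ_two_to_one (Q := fun s => a * (∑ x ∈ s, x) + b * (∏ x ∈ s, x) + c ≠ 0)
    have h2 : (Finset.univ.offDiag.filter (fun p : F × F =>
            a * (∑ x ∈ ({p.1, p.2} : Finset F), x)
              + b * (∏ x ∈ ({p.1, p.2} : Finset F), x) + c ≠ 0))
        = Finset.univ.offDiag.filter
            (fun p : F × F => ¬ a * (p.1 + p.2) + b * (p.1 * p.2) + c = 0) := by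
      apply Finset.filter_congr
      intro p hp
      have hne : p.1 ≠ p.2 := (Finset.mem_offDiag.mp hp).2.2
      rw [Finset.sum_pair hne, Finset.prod_pair hne]
    have h3 := Finset.card_filter_add_card_filter_not (s := Finset.univ.offDiag)
      (p := fun p : F × F => a * (p.1 + p.2) + b * (p.1 * p.2) + c = 0)
    have h4 : (Finset.univ.offDiag : Finset (F × F)).card = q * q - q := by
      rw [Finset.offDiag_card, Finset.card_univ]
    rw [h1, h2]
    omega
  by_cases hb : b = 0
  · subst hb
    by_cases ha : a = 0
    · subst ha
      have hc : c ≠ 0 := by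
        rintro rfl
        apply hw0
        funext s
        show (0 : F) * _ + 0 * _ + 0 = 0
        ring
      right; right; right
      show (Finset.univ.filter (fun s : {s : Finset F // s.card = 2} =>
          ev 0 0 c s ≠ 0)).card = q * (q - 1) / 2
      rw [Finset.filter_true_of_mem (fun s _ => by
        show (0 : F) * _ + 0 * _ + c ≠ 0
        simpa using hc)]
      rw [Finset.card_univ, Fintype.card_finset_len, Nat.choose_two_right]
    · -- linear case
      have hM : (Finset.univ.offDiag.filter
            (fun p : F × F => a * (p.1 + p.2) + 0 * (p.1 * p.2) + c = 0)).card
          = q - 1 := by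
        have : (Finset.univ.offDiag.filter
              (fun p : F × F => a * (p.1 + p.2) + 0 * (p.1 * p.2) + c = 0))
            = Finset.univ.offDiag.filter (fun p : F × F => p.1 + p.2 = -(c / a)) := by
          apply Finset.filter_congr
          intro p _
          constructor
          · intro h
            field_simp
            linear_combination h
          · intro h
            have h' : a * (p.1 + p.2) = -c := by rw [h]; field_simp
            linear_combination h'
        rw [this, DJ_count_lin h2F]
      have h2wt := key a 0 c
      rw [hM] at h2wt
      right; left
      rw [pow_two, DJ_sq_id1 (by omega)]
      omega
  · have h2wt := key a b c
    rw [DJ_change_var a b c hb] at h2wt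
    by_cases hD : a * a - b * c = 0
    · rw [show (Finset.univ.offDiag.filter (fun p : F × F => p.1 * p.2 = a * a - b * c))
            = Finset.univ.offDiag.filter (fun p : F × F => p.1 * p.2 = 0) by
          simp only [hD], DJ_count_hyp_zero] at h2wt
      left
      rw [DJ_sq_id2 hq3]
      omega
    · rw [DJ_count_hyp_ne _ hD] at h2wt
      by_cases hsq : ∃ d : F, d * d = a * a - b * c
      · obtain ⟨d, hd⟩ := hsq
        rw [DJ_filter_sq h2F hd hD] at h2wt
        right; right; left
        rw [pow_two]
        omega
      · push_neg at hsq
        rw [DJ_filter_nonsq hsq] at h2wt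
        right; left
        rw [pow_two, DJ_sq_id1 (by omega)]
        omega
end
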